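/- Let X be a finite simplicial complex of dimension d, 0 < δ̃ < ε < 1/(d+1), let x ∈ |X| and define D(x) := conv({x} ∪ |σ^ε_max(x)|), the convex hull inside the geometric simplex |σ^0_min(x)|. Then for every y ∈ D(x) with y ≠ x we have σ^{δ̃}_max(y) ⊆ σ^{δ̃}_min(x), i.e., every vertex v with t_v(y) ≥ δ̃ satisfies t_v(x) > δ̃. -/
import Mathlib


/-- The closed geometric simplex spanned by a set `s` of vertices. -/
def gsS {V : Type*} [Fintype V] (s : Set V) : Set (V → ℝ) :=
  {x | (∀ v, 0 ≤ x v) ∧ (∀ v, v ∉ s → x v = 0) ∧ ∑ v, x v = 1}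

/-- The geometric realization of a simplicial complex `K`. -/
def geomReal {V : Type*} [Fintype V] (K : Set (Finset V)) : Set (V → ℝ) :=
  ⋃ σ ∈ K, gsS (↑σ : Set V)

lemma gsS_convex {V : Type*} [Fintype V] (s : Set V) : Convex ℝ (gsS s) := by
  intro p hp q hq a b ha hb hab
  obtain ⟨hp0, hps, hp1⟩ := hp
  obtain ⟨hq0, hqs, hq1⟩ := hq
  refine ⟨fun v => add_nonneg (mul_nonneg ha (hp0 v)) (mul_nonneg hb (hq0 v)),
    fun v hv => by simp [hps v hv, hqs v hv], ?_⟩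
  simp only [Pi.add_apply, Pi.smul_apply, smul_eq_mul]
  rw [Finset.sum_add_distrib, ← Finset.mul_sum, ← Finset.mul_sum, hp1, hq1]
  linarith

theorem Dmap_max_subset_min {V : Type*} [Fintype V] [DecidableEq V]
    (K : Set (Finset V)) (d : ℕ)
    (hne : ∀ σ ∈ K, σ.Nonempty)
    (hK : ∀ σ ∈ K, ∀ τ : Finset V, τ ⊆ σ → τ.Nonempty → τ ∈ K)
    (hdim : ∀ σ ∈ K, σ.card ≤ d + 1)
    (dlt ε : ℝ) (h0 : 0 < dlt) (h1 : dlt < ε) (h2 : ε < 1 / (d + 1))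
    (x : V → ℝ) (hx : x ∈ geomReal K)
    (y : V → ℝ)
    (hy : y ∈ convexHull ℝ ({x} ∪ gsS {v : V | ε ≤ x v}))
    (hyx : y ≠ x) :
    ∀ v : V, dlt ≤ y v → dlt < x v := by
  -- unpack x ∈ geomReal K
  simp only [geomReal, Set.mem_iUnion] at hx
  obtain ⟨σ, hσK, hx0, hxs, hx1⟩ := hx
  -- there is a vertex with ε ≤ x v
  have hd1 : (0:ℝ) < (d:ℝ) + 1 := by positivity
  have hS : ∃ v0 : V, ε ≤ x v0 := by
    by_contra hcon
    push_neg at hcon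
    have hsum : ∑ v ∈ σ, x v = 1 := by
      rw [← hx1]
      exact Finset.sum_subset (Finset.subset_univ σ) (fun v _ hv => hxs v hv)
    have hlt : ∑ v ∈ σ, x v < ∑ v ∈ σ, ε :=
      Finset.sum_lt_sum_of_nonempty (hne σ hσK) (fun v _ => hcon v)
    rw [hsum, Finset.sum_const, nsmul_eq_mul] at hlt
    have hcard : (σ.card : ℝ) ≤ (d:ℝ) + 1 := by
      exact_mod_cast hdim σ hσK
    have hε0 : 0 ≤ ε := le_of_lt (lt_trans h0 h1)
    have : (σ.card : ℝ) * ε ≤ ((d:ℝ) + 1) * ε := by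
      exact mul_le_mul_of_nonneg_right hcard hε0
    have h2' : ((d:ℝ) + 1) * ε < 1 := by
      rw [lt_div_iff₀ hd1] at h2
      linarith
    linarith
  obtain ⟨v0, hv0⟩ := hS
  -- gsS S nonempty
  set S : Set V := {v : V | ε ≤ x v} with hSdef
  have hSne : (gsS S).Nonempty := by
    refine ⟨fun w => if w = v0 then 1 else 0, ?_, ?_, ?_⟩
    · intro v; dsimp only; split <;> norm_num
    · intro v hv
      have hne' : v ≠ v0 := by
        rintro rfl; exact hv hv0
      simp [hne']
    · simp
  -- rewrite hull of insert
  rw [Set.singleton_union] at hy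
  rw [convexHull_insert hSne, (gsS_convex S).convexHull_eq] at hy
  rw [mem_convexJoin] at hy
  obtain ⟨p, hp, z, hz, hyseg⟩ := hy
  rw [Set.mem_singleton_iff] at hp
  rw [hp] at hyseg
  obtain ⟨a, b, ha, hb, hab, hy⟩ := hyseg
  obtain ⟨hz0, hzS, hz1⟩ := hz
  have hblt : b ≠ 0 := by
    rintro rfl
    apply hyx
    rw [← hy]
    have : a = 1 := by linarith
    simp [this]
  have ha1 : a < 1 := by
    rcases lt_or_eq_of_le hb with h | h
    · linarith
    · exact absurd h.symm hblt
  intro v hv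
  have hyv : y v = a * x v + b * z v := by
    rw [← hy]; simp
  by_cases hzv : z v = 0
  · -- y v = a * x v, a < 1
    rw [hyv, hzv, mul_zero, add_zero] at hv
    have hxv : 0 < x v := by
      by_contra hxc
      push_neg at hxc
      have : a * x v ≤ 0 := mul_nonpos_of_nonneg_of_nonpos ha hxc
      linarith
    have : a * x v < x v := by nlinarith
    linarith
  · -- z v ≠ 0 ⟹ ε ≤ x v
    have : v ∈ S := by
      by_contra hvS
      exact hzv (hzS v hvS)
    exact lt_of_lt_of_le h1 this
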